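/- Let k ≥ 1 and let G₁, …, G_k and H₁, …, H_k be finite groups such that |G_i| = |H_i| for all i, and gcd(|G_i|, |G_j|) = 1 and gcd(|H_i|, |H_j|) = 1 for all i ≠ j. Let G = G₁ × ⋯ × G_k and H = H₁ × ⋯ × H_k. Then there exists a bijection F : G → H satisfying, for all x, y ∈ G, y ∈ ⟨x⟩ ⟺ F(y) ∈ ⟨F(x)⟩, if and only if for each i there exists a bijection f_i : G_i → H_i satisfying, for all x, y ∈ G_i, y ∈ ⟨x⟩ ⟺ f_i(y) ∈ ⟨f_i(x)⟩. (That is, DPow(G) ≅ DPow(H) iff DPow(G_i) ≅ DPow(H_i) for all i.) -/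

import Mathlib

open Subgroup

section Aux

variable {k : ℕ} {G : Fin k → Type*} [∀ i, Group (G i)] [∀ i, Finite (G i)]

/-- CRT-style membership in cyclic subgroups of a product of coprime-order groups. -/
lemma mem_zpowers_pi_iff
    (hG : ∀ i j, i ≠ j → Nat.Coprime (Nat.card (G i)) (Nat.card (G j)))
    (x y : ∀ i, G i) :
    y ∈ zpowers x ↔ ∀ i, y i ∈ zpowers (x i) := by
  constructor
  · rintro ⟨n, rfl⟩ i
    exact ⟨n, rfl⟩
  · intro h
    have hm : ∀ i, ∃ m : ℕ, (x i) ^ m = y i := by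
      intro i
      obtain ⟨m, hmm⟩ := mem_powers_iff_mem_zpowers.2 (h i)
      exact ⟨m, hmm⟩
    choose m hmm using hm
    set a : Fin k → ℕ := fun i => orderOf (x i) with ha
    have hcop : Pairwise (Function.onFun Nat.Coprime a) := by
      intro i j hij
      exact Nat.Coprime.coprime_dvd_left (orderOf_dvd_natCard (x i))
        (Nat.Coprime.coprime_dvd_right (orderOf_dvd_natCard (x j)) (hG i j hij))
    have hpos : ∀ i, 0 < a i := fun i => (orderOf_pos (x i))
    have hprodpos : 0 < ∏ i, a i := Finset.prod_pos (fun i _ => hpos i)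
    haveI : NeZero (∏ i, a i) := ⟨hprodpos.ne'⟩
    set e := ZMod.prodEquivPi a hcop
    set w : ZMod (∏ i, a i) := e.symm (fun i => ((m i : ZMod (a i)))) with hw
    set N : ℕ := w.val with hN
    refine ⟨(N : ℤ), ?_⟩
    have hNw : (N : ZMod (∏ i, a i)) = w := by
      simp [hN, ZMod.natCast_val, ZMod.cast_id]
    funext i
    have hdvd : a i ∣ ∏ j, a j := Finset.dvd_prod_of_mem a (Finset.mem_univ i)
    -- the two ring homs `ZMod (∏ a) →+* ZMod (a i)` agree
    have hhom : (Pi.evalRingHom (fun j => ZMod (a j)) i).comp (e : ZMod (∏ j, a j) →+* ∀ j, ZMod (a j))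
        = ZMod.castHom hdvd (ZMod (a i)) := RingHom.ext_zmod _ _
    have h1 : (N : ZMod (a i)) = (m i : ZMod (a i)) := by
      have h2 : (ZMod.castHom hdvd (ZMod (a i))) ((N : ZMod (∏ j, a j)))
          = (N : ZMod (a i)) := map_natCast _ _
      rw [hNw] at h2
      have h3 : (ZMod.castHom hdvd (ZMod (a i))) w = e w i := by
        rw [← hhom]; rfl
      have h4 : e w i = (m i : ZMod (a i)) := by
        rw [hw, RingEquiv.apply_symm_apply]
      rw [← h2, h3, h4]
    have hmod : N ≡ m i [MOD a i] := (ZMod.natCast_eq_natCast_iff _ _ _).1 h1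
    have : (x i) ^ N = (x i) ^ (m i) := pow_eq_pow_iff_modEq.2 hmod
    calc (x ^ (N : ℤ)) i = (x i) ^ N := by rw [zpow_natCast]; rfl
      _ = y i := this.trans (hmm i)

/-- An element of the product has order dividing `|G i|` iff it is supported at `i`. -/
lemma orderOf_dvd_char
    (hG : ∀ i j, i ≠ j → Nat.Coprime (Nat.card (G i)) (Nat.card (G j)))
    (i : Fin k) (x : ∀ j, G j) :
    orderOf x ∣ Nat.card (G i) ↔ ∀ j, j ≠ i → x j = 1 := by
  constructor
  · intro h j hj
    have hxj : orderOf (x j) ∣ orderOf x := by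
      apply orderOf_dvd_of_pow_eq_one
      have : x ^ orderOf x = 1 := pow_orderOf_eq_one x
      calc (x j) ^ orderOf x = (x ^ orderOf x) j := rfl
        _ = 1 := by rw [this]; rfl
    have h1 : orderOf (x j) ∣ Nat.card (G i) := hxj.trans h
    have h2 : orderOf (x j) ∣ Nat.card (G j) := orderOf_dvd_natCard (x j)
    have : orderOf (x j) = 1 :=
      (Nat.gcd_self (orderOf (x j))).symm.trans
        (((hG j i hj).coprime_dvd_left h2).coprime_dvd_right h1)
    exact orderOf_eq_one_iff.1 this
  · intro h
    apply orderOf_dvd_of_pow_eq_one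
    funext j
    by_cases hj : j = i
    · subst hj
      calc (x ^ Nat.card (G j)) j = (x j) ^ Nat.card (G j) := rfl
        _ = 1 := orderOf_dvd_iff_pow_eq_one.1 (orderOf_dvd_natCard (x j))
    · calc (x ^ Nat.card (G i)) j = (x j) ^ Nat.card (G i) := rfl
        _ = 1 := by rw [h j hj, one_pow]

/-- `mulSingle` membership transfers along cyclic subgroups. -/
lemma single_mem_iff
    (hG : ∀ i j, i ≠ j → Nat.Coprime (Nat.card (G i)) (Nat.card (G j)))
    (i : Fin k) (u v : G i) :
    Pi.mulSingle i v ∈ zpowers (Pi.mulSingle i u) ↔ v ∈ zpowers u := by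
  rw [mem_zpowers_pi_iff hG]
  constructor
  · intro h; simpa using h i
  · intro h j
    by_cases hj : j = i
    · subst hj; simpa using h
    · rw [Pi.mulSingle_eq_of_ne hj, Pi.mulSingle_eq_of_ne hj]
      exact one_mem _

end Aux

/-- A directed-power-graph isomorphism preserves element orders. -/
lemma dpow_orderOf_eq {G H : Type*} [Group G] [Finite G] [Group H] [Finite H]
    (F : G ≃ H) (hF : ∀ x y : G, y ∈ zpowers x ↔ F y ∈ zpowers (F x)) (x : G) :
    orderOf (F x) = orderOf x := by
  rw [← Nat.card_zpowers, ← Nat.card_zpowers]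
  exact Nat.card_congr (F.subtypeEquiv (fun y => hF x y)).symm

theorem dpow_iso_of_coprime_product
    {k : ℕ} (hk : 1 ≤ k)
    (G H : Fin k → Type*)
    [∀ i, Group (G i)] [∀ i, Finite (G i)]
    [∀ i, Group (H i)] [∀ i, Finite (H i)]
    (hcard : ∀ i, Nat.card (G i) = Nat.card (H i))
    (hG : ∀ i j, i ≠ j → Nat.Coprime (Nat.card (G i)) (Nat.card (G j)))
    (hH : ∀ i j, i ≠ j → Nat.Coprime (Nat.card (H i)) (Nat.card (H j))) :
    (∃ F : (∀ i, G i) ≃ (∀ i, H i),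
        ∀ x y : ∀ i, G i, y ∈ Subgroup.zpowers x ↔ F y ∈ Subgroup.zpowers (F x)) ↔
      (∀ i, ∃ f : G i ≃ H i,
        ∀ x y : G i, y ∈ Subgroup.zpowers x ↔ f y ∈ Subgroup.zpowers (f x)) := by
  constructor
  · rintro ⟨F, hF⟩ i
    -- `F` sends elements supported at `i` to elements supported at `i`
    have key : ∀ x : ∀ j, G j, (∀ j, j ≠ i → x j = 1) → ∀ j, j ≠ i → F x j = 1 := by
      intro x hx
      have h1 : orderOf x ∣ Nat.card (G i) := (orderOf_dvd_char hG i x).2 hx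
      have h2 : orderOf (F x) ∣ Nat.card (H i) := by
        rw [dpow_orderOf_eq F hF x, ← hcard i]; exact h1
      exact (orderOf_dvd_char hH i (F x)).1 h2
    have key' : ∀ y : ∀ j, H j, (∀ j, j ≠ i → y j = 1) → ∀ j, j ≠ i → F.symm y j = 1 := by
      intro y hy
      have hF' : ∀ x z : ∀ j, G j, x ∈ zpowers z ↔ F x ∈ zpowers (F z) := fun x z => hF z x
      have h1 : orderOf y ∣ Nat.card (H i) := (orderOf_dvd_char hH i y).2 hy
      have h2 : orderOf (F.symm y) ∣ Nat.card (G i) := by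
        rw [hcard i, ← dpow_orderOf_eq F hF (F.symm y), F.apply_symm_apply]; exact h1
      exact (orderOf_dvd_char hG i (F.symm y)).1 h2
    -- the candidate map and its inverse
    refine ⟨{
        toFun := fun a => F (Pi.mulSingle i a) i
        invFun := fun b => F.symm (Pi.mulSingle i b) i
        left_inv := ?_
        right_inv := ?_ }, ?_⟩
    · intro a
      have h1 : F (Pi.mulSingle i a) = Pi.mulSingle i (F (Pi.mulSingle i a) i) := by
        funext j
        by_cases hj : j = i
        · subst hj; simp
        · rw [key (Pi.mulSingle i a) (fun j hj => Pi.mulSingle_eq_of_ne hj a) j hj,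
            Pi.mulSingle_eq_of_ne hj]
      show F.symm (Pi.mulSingle i (F (Pi.mulSingle i a) i)) i = a
      rw [← h1, F.symm_apply_apply, Pi.mulSingle_eq_same]
    · intro b
      have h1 : F.symm (Pi.mulSingle i b) = Pi.mulSingle i (F.symm (Pi.mulSingle i b) i) := by
        funext j
        by_cases hj : j = i
        · subst hj; simp
        · rw [key' (Pi.mulSingle i b) (fun j hj => Pi.mulSingle_eq_of_ne hj b) j hj,
            Pi.mulSingle_eq_of_ne hj]
      show F (Pi.mulSingle i (F.symm (Pi.mulSingle i b) i)) i = b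
      rw [← h1, F.apply_symm_apply, Pi.mulSingle_eq_same]
    · intro a b
      have hsingle : ∀ c : G i, F (Pi.mulSingle i c) = Pi.mulSingle i (F (Pi.mulSingle i c) i) := by
        intro c
        funext j
        by_cases hj : j = i
        · subst hj; simp
        · rw [key (Pi.mulSingle i c) (fun j hj => Pi.mulSingle_eq_of_ne hj c) j hj,
            Pi.mulSingle_eq_of_ne hj]
      rw [← single_mem_iff hG i a b, hF, hsingle a, hsingle b, single_mem_iff hH]
      simp only [Equiv.coe_fn_mk]
  · intro h
    choose f hf using h
    refine ⟨Equiv.piCongrRight f, ?_⟩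
    intro x y
    rw [mem_zpowers_pi_iff hG, mem_zpowers_pi_iff hH]
    exact forall_congr' fun i => hf i (x i) (y i)
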